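/- There exist a finite alphabet Σ and a history-deterministic generalised coBüchi automaton A over Σ such that every history-deterministic generalised Büchi automaton recognising Σ^ω ∖ L(A) has strictly more states than A. -/

import Mathlib

/-- A transition of an automaton: source state, input letter, output colour,
destination state.  (Acceptance is transition-based.) -/
structure AutTrans (Q A Γ : Type) where
  src : Q
  lab : A
  out : Γ
  dst : Q

/-- An (ω-)automaton with finite state set `Q`, input alphabet `A`,
output alphabet `Γ`, initial state `init`, transition set `delta` and
acceptance condition `acc ⊆ Γ^ω`. -/
structure Automaton (A Γ : Type) where
  Q : Type
  fin : Fintype Q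
  init : Q
  delta : Set (AutTrans Q A Γ)
  acc : Set (ℕ → Γ)

/-- The generalised Büchi condition over the colour set `C`
(output alphabet `𝒫(C)`): every colour appears infinitely often. -/
def genBuchi (C : Type) : Set (ℕ → Set C) :=
  {f | ∀ c : C, ∀ n : ℕ, ∃ m : ℕ, n ≤ m ∧ c ∈ f m}

/-- The generalised coBüchi condition over the colour set `C`:
some colour appears only finitely often. -/
def genCoBuchi (C : Type) : Set (ℕ → Set C) :=
  {f | ∃ c : C, ∃ n : ℕ, ∀ m : ℕ, n ≤ m → c ∉ f m}

namespace Automaton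

variable {A Γ : Type}

/-- Number of states. -/
def size (M : Automaton A Γ) : ℕ := @Fintype.card M.Q M.fin

/-- `ρ` is a run of `M` on the word `w`, starting in the state `q`. -/
def IsRunFrom (M : Automaton A Γ) (q : M.Q) (w : ℕ → A)
    (ρ : ℕ → AutTrans M.Q A Γ) : Prop :=
  (ρ 0).src = q ∧ ∀ n : ℕ, ρ n ∈ M.delta ∧ (ρ n).lab = w n ∧ (ρ n).dst = (ρ (n + 1)).src

/-- The language of `M` with initial state `q`. -/
def LangFrom (M : Automaton A Γ) (q : M.Q) : Set (ℕ → A) :=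
  {w | ∃ ρ : ℕ → AutTrans M.Q A Γ, M.IsRunFrom q w ρ ∧ (fun n => (ρ n).out) ∈ M.acc}

/-- The language of `M`. -/
def Lang (M : Automaton A Γ) : Set (ℕ → A) := M.LangFrom M.init

/-- For every state and letter there is at most one outgoing transition. -/
def Deterministic (M : Automaton A Γ) : Prop :=
  ∀ t ∈ M.delta, ∀ t' ∈ M.delta, t.src = t'.src → t.lab = t'.lab → t = t'

/-- For every state and letter there is at least one outgoing transition. -/
def Complete (M : Automaton A Γ) : Prop :=
  ∀ (p : M.Q) (a : A), ∃ t ∈ M.delta, t.src = p ∧ t.lab = a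

/-- The infinite sequence of transitions chosen by a resolver `r` on the word `w`
(`r` is applied to all nonempty finite prefixes of `w`). -/
def resRun (M : Automaton A Γ) (r : List A → AutTrans M.Q A Γ) (w : ℕ → A) :
    ℕ → AutTrans M.Q A Γ :=
  fun n => r (List.ofFn fun i : Fin (n + 1) => w i)

/-- `r` is a resolver for `M`: on every word it induces a run,
which is accepting whenever the word is in the language of `M`. -/
def IsResolver (M : Automaton A Γ) (r : List A → AutTrans M.Q A Γ) : Prop :=
  ∀ w : ℕ → A, M.IsRunFrom M.init w (M.resRun r w) ∧
    (w ∈ M.Lang → (fun n => (M.resRun r w n).out) ∈ M.acc)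

/-- History-determinism: existence of a resolver. -/
def HistoryDeterministic (M : Automaton A Γ) : Prop := ∃ r, M.IsResolver r

/-- `M` admits a resolver such that every state occurs on some accepting run
induced by the resolver. -/
def ResolverTrim (M : Automaton A Γ) : Prop :=
  ∃ r, M.IsResolver r ∧ ∀ q : M.Q, ∃ w ∈ M.Lang, ∃ n : ℕ, (M.resRun r w n).src = q

/-- Reachability along transitions of `M`. -/
def Reach (M : Automaton A Γ) (p q : M.Q) : Prop :=
  Relation.ReflTransGen (fun x y => ∃ t ∈ M.delta, t.src = x ∧ t.dst = y) p q

/-- Nondeterministic choices lead to language-equivalent states. -/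
def SemanticallyDeterministic (M : Automaton A Γ) : Prop :=
  ∀ t ∈ M.delta, ∀ t' ∈ M.delta, t.src = t'.src → t.lab = t'.lab →
    M.LangFrom t.dst = M.LangFrom t'.dst

/- CoBüchi notions: a coBüchi automaton has output alphabet `Set Unit`
(`𝒫(C)` with `|C| = 1`); a transition is a coBüchi transition iff its output
is `{()}` (i.e. `() ∈ out`), and safe iff its output is `∅`. -/

/-- A safe (non-coBüchi) transition from `p` to `q`. -/
def SafeStep (M : Automaton A (Set Unit)) (p q : M.Q) : Prop :=
  ∃ t ∈ M.delta, t.src = p ∧ t.dst = q ∧ () ∉ t.out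

/-- `p` and `q` lie in the same safe component (same SCC of the safe graph). -/
def SafeConn (M : Automaton A (Set Unit)) (p q : M.Q) : Prop :=
  Relation.ReflTransGen M.SafeStep p q ∧ Relation.ReflTransGen M.SafeStep q p

/-- The safe component (as a set of states) of `q`. -/
def safeComponentOf (M : Automaton A (Set Unit)) (q : M.Q) : Set M.Q :=
  {p | M.SafeConn p q}

/-- `(S, D)` is a safe component of `M`, given with its set of safe transitions. -/
def IsSafeComponent (M : Automaton A (Set Unit)) (S : Set M.Q)
    (D : Set (AutTrans M.Q A (Set Unit))) : Prop :=
  (∃ q : M.Q, S = M.safeComponentOf q) ∧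
    D = {t | t ∈ M.delta ∧ t.src ∈ S ∧ t.dst ∈ S ∧ () ∉ t.out}

/-- The safe language of the state `q`: words labelling an infinite safe path from `q`. -/
def SafeLang (M : Automaton A (Set Unit)) (q : M.Q) : Set (ℕ → A) :=
  {w | ∃ ρ : ℕ → AutTrans M.Q A (Set Unit),
    M.IsRunFrom q w ρ ∧ ∀ n : ℕ, () ∉ (ρ n).out}

/-- The automaton restricted to safe transitions is deterministic. -/
def SafeDeterministic (M : Automaton A (Set Unit)) : Prop :=
  ∀ t ∈ M.delta, ∀ t' ∈ M.delta, () ∉ t.out → () ∉ t'.out →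
    t.src = t'.src → t.lab = t'.lab → t = t'

/-- Every transition joining two distinct safe components is a coBüchi transition. -/
def NormalForm (M : Automaton A (Set Unit)) : Prop :=
  ∀ t ∈ M.delta, () ∉ t.out → M.SafeConn t.src t.dst

/-- A coBüchi automaton is nice if all states are reachable and it is
semantically deterministic, in normal form, and safe deterministic. -/
def Nice (M : Automaton A (Set Unit)) : Prop :=
  (∀ q : M.Q, M.Reach M.init q) ∧ M.SemanticallyDeterministic ∧
    M.NormalForm ∧ M.SafeDeterministic

/-- Equivalent states with equal safe languages are equal. -/
def SafeMinimal (M : Automaton A (Set Unit)) : Prop :=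
  ∀ p q : M.Q, M.LangFrom p = M.LangFrom q → M.SafeLang p = M.SafeLang q → p = q

/-- Equivalent states with safe languages comparable for inclusion lie in the
same safe component. -/
def SafeCentralised (M : Automaton A (Set Unit)) : Prop :=
  ∀ p q : M.Q, M.LangFrom p = M.LangFrom q →
    (M.SafeLang p ⊆ M.SafeLang q ∨ M.SafeLang q ⊆ M.SafeLang p) → M.SafeConn p q

end Automaton

/-- The word `u · w`. -/
def wordAppend {A : Type} (u : List A) (w : ℕ → A) : ℕ → A :=
  fun n => if h : n < u.length then u.get ⟨n, h⟩ else w (n - u.length)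

/-- The residual `u⁻¹L`. -/
def residualLang {A : Type} (u : List A) (L : Set (ℕ → A)) : Set (ℕ → A) :=
  {w | wordAppend u w ∈ L}

/-- `L` is prefix-independent: `u⁻¹L = L` for every finite word `u`. -/
def PrefixIndependent {A : Type} (L : Set (ℕ → A)) : Prop :=
  ∀ u : List A, residualLang u L = L

/-- The local alphabet `Σ_R` at the residual `R`: nonempty finite words `v`
with `v⁻¹R = R` such that no proper nonempty prefix `v'` of `v`
satisfies `v'⁻¹R = R`.  (For `R = u⁻¹L` this says `(uv)⁻¹L = u⁻¹L` and
`(uv')⁻¹L ≠ u⁻¹L` for proper nonempty prefixes.) -/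
def localAlphabet {A : Type} (R : Set (ℕ → A)) : Set (List A) :=
  {v | v ≠ [] ∧ residualLang v R = R ∧
    ∀ v' : List A, v' <+: v → v' ≠ [] → v' ≠ v → residualLang v' R ≠ R}

/-- `PathCol M q w X p`: there is a finite path of `M` from `q` to `p`
labelled by `w` whose transitions produce exactly the set of colours `X`
(the union of the outputs along the path). -/
inductive PathCol {A C : Type} (M : Automaton A (Set C)) :
    M.Q → List A → Set C → M.Q → Prop
  | nil (q : M.Q) : PathCol M q [] ∅ q
  | cons {q r : M.Q} {a : A} {w : List A} {X : Set C}
      (t : AutTrans M.Q A (Set C)) (ht : t ∈ M.delta) (hsrc : t.src = q)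
      (hlab : t.lab = a) (htail : PathCol M t.dst w X r) :
      PathCol M q (a :: w) (t.out ∪ X) r

/-- The localisation `A|_R` of a generalised coBüchi automaton `M` to the
residual `R`, with initial state `q0`: states are the states of `M`
recognising `R`, the alphabet is `Σ_R`, and there is a transition
`q →^{w:X} p` for every finite path of `M` from `q` to `p` labelled by
`w ∈ Σ_R` producing the set of colours `X`. -/
noncomputable def localAut {A C : Type} (M : Automaton A (Set C)) (R : Set (ℕ → A))
    (q0 : {q : M.Q // M.LangFrom q = R}) :
    Automaton (↥(localAlphabet R)) (Set C) where
  Q := {q : M.Q // M.LangFrom q = R}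
  fin := by
    letI := M.fin
    classical
    infer_instance
  init := q0
  delta := {t | PathCol M t.src.1 t.lab.1 t.out t.dst.1}
  acc := genCoBuchi C

/-- The automaton `M` with initial state `q`. -/
def withInit {A Γ : Type} (M : Automaton A Γ) (q : M.Q) : Automaton A Γ :=
  { M with init := q }

/-- Recolour the automaton `M` via `f`, keeping states, initial state and the
underlying transitions, and replacing the acceptance condition by `acc'`. -/
def recolor {A Γ Γ' : Type} (M : Automaton A Γ) (f : AutTrans M.Q A Γ → Γ')
    (acc' : Set (ℕ → Γ')) : Automaton A Γ' where
  Q := M.Q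
  fin := M.fin
  init := M.init
  delta := {t' | ∃ t ∈ M.delta, t'.src = t.src ∧ t'.lab = t.lab ∧ t'.out = f t ∧ t'.dst = t.dst}
  acc := acc'

/-- Concatenation of the first `k` blocks of a sequence of finite words. -/
def flattenPrefix {A : Type} (u : ℕ → List A) (k : ℕ) : List A :=
  (List.ofFn fun i : Fin k => u i).flatten

/-- `x ∈ A^ω` is the concatenation of the infinite sequence of finite words `u`. -/
def IsFlatten {A : Type} (u : ℕ → List A) (x : ℕ → A) : Prop :=
  ∀ (k n : ℕ) (h : n < (flattenPrefix u k).length),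
    (flattenPrefix u k).get ⟨n, h⟩ = x n

/-- Cascade composition `B ∘ M`: the outputs of `M` are fed as inputs to `B`. -/
def composeAut {A Γ Γ' : Type} (B : Automaton Γ Γ') (M : Automaton A Γ) :
    Automaton A Γ' where
  Q := M.Q × B.Q
  fin := by letI := M.fin; letI := B.fin; infer_instance
  init := (M.init, B.init)
  delta := {t | ∃ tM ∈ M.delta, ∃ tB ∈ B.delta,
    t.src = (tM.src, tB.src) ∧ t.lab = tM.lab ∧ tB.lab = tM.out ∧
    t.out = tB.out ∧ t.dst = (tM.dst, tB.dst)}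
  acc := B.acc

/-- The language `L_G = ⋂_v L_v` associated with a graph `G`: words over the
vertices such that for every vertex `v`, either the factor `vv` occurs
infinitely often, or letters outside the closed neighbourhood `N[v]` occur
infinitely often. -/
def LG {V : Type} (G : SimpleGraph V) : Set (ℕ → V) :=
  {w | ∀ v : V, (∀ n : ℕ, ∃ m : ℕ, n ≤ m ∧ w m = v ∧ w (m + 1) = v) ∨
      (∀ n : ℕ, ∃ m : ℕ, n ≤ m ∧ w m ≠ v ∧ ¬ G.Adj v (w m))}

namespace Stmt4Aux

abbrev Λ : Type := Fin 3

/-- The language `L_{K₃}`: every letter has its square occurring infinitely often. -/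
def K : Set (ℕ → Λ) :=
  {w | ∀ v : Λ, ∀ n : ℕ, ∃ m : ℕ, n ≤ m ∧ w m = v ∧ w (m + 1) = v}

def Mdelta : Set (AutTrans Bool Λ (Set Λ)) :=
  {t | (t.dst = false ∧ t.out = {t.lab}) ∨
       (t.src = false ∧ t.dst = true ∧ t.out = {t.lab}ᶜ) ∨
       (t.src = true ∧ t.dst = true ∧ t.out = Set.univ)}

def M : Automaton Λ (Set Λ) where
  Q := Bool
  fin := inferInstance
  init := false
  delta := Mdelta
  acc := genCoBuchi Λ

lemma M_lang_iff (w : ℕ → Λ) :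
    w ∈ M.Lang ↔ ∃ v : Λ, ∃ N : ℕ, ∀ n, N ≤ n → ¬(w n = v ∧ w (n + 1) = v) := by
  constructor
  · rintro ⟨ρ, ⟨hinit, hrun⟩, hacc⟩
    obtain ⟨c, N, hc⟩ := hacc
    refine ⟨c, N, fun n hn => ?_⟩
    rintro ⟨h1, h2⟩
    have hd1 := (hrun n).1
    have hl1 := (hrun n).2.1
    have hnext := (hrun n).2.2
    rcases hd1 with ⟨_, hout⟩ | ⟨_, hdst, hout⟩ | ⟨_, _, hout⟩
    · exact hc n hn (by show c ∈ (ρ n).out; rw [hout, hl1, h1]; rfl)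
    · -- dst true: look at next transition
      have hsrc2 : (ρ (n+1)).src = true := by rw [← hnext, hdst]
      have hd2 := (hrun (n+1)).1
      have hl2 := (hrun (n+1)).2.1
      rcases hd2 with ⟨_, hout2⟩ | ⟨hsrc2', _, _⟩ | ⟨_, _, hout2⟩
      · exact hc (n+1) (by omega) (by show c ∈ (ρ (n+1)).out; rw [hout2, hl2, h2]; rfl)
      · rw [hsrc2] at hsrc2'; exact absurd hsrc2' (by simp)
      · exact hc (n+1) (by omega) (by show c ∈ (ρ (n+1)).out; rw [hout2]; trivial)
    · exact hc n hn (by show c ∈ (ρ n).out; rw [hout]; trivial)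
  · rintro ⟨v, N, hv⟩
    classical
    set s : ℕ → Bool := fun n => match n with
      | 0 => false
      | m + 1 => decide (w m = v) with hs
    set o : ℕ → Set Λ := fun n =>
      if s (n+1) = false then {w n} else if s n = false then {w n}ᶜ else Set.univ with ho
    refine ⟨fun n => ⟨s n, w n, o n, s (n+1)⟩, ⟨rfl, fun n => ⟨?_, rfl, rfl⟩⟩, ?_⟩
    · by_cases h1 : s (n+1) = false
      · left; exact ⟨h1, by simp [ho, h1]⟩
      · by_cases h2 : s n = false
        · right; left
          refine ⟨h2, by simpa using h1, by simp [ho, h1, h2]⟩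
        · right; right
          refine ⟨by simpa using h2, by simpa using h1, by simp [ho, h1, h2]⟩
    · refine ⟨v, N + 1, fun m hm => ?_⟩
      show v ∉ o m
      obtain ⟨m', rfl⟩ : ∃ m', m = m' + 1 := ⟨m - 1, by omega⟩
      by_cases h1 : s (m'+1+1) = false
      · have : w (m'+1) ≠ v := by
          simpa [hs] using h1
        simp [ho, h1, Set.mem_singleton_iff]
        exact fun h => this h.symm
      · have hw1 : w (m'+1) = v := by simpa [hs] using h1
        by_cases h2 : s (m'+1) = false
        · simp [ho, h1, h2, hw1]
        · have hw0 : w m' = v := by simpa [hs] using h2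
          exact absurd ⟨hw0, by simpa using hw1⟩ (hv m' (by omega))

lemma M_lang_eq : M.Lang = Kᶜ := by
  ext w
  rw [M_lang_iff]
  simp only [Set.mem_compl_iff, K, Set.mem_setOf_eq]
  push_neg
  rfl


/-- Resolver state update: `(current-state, watched letter)` updated by a letter. -/
def step (p : Bool × Λ) (x : Λ) : Bool × Λ :=
  if p.1 = true ∧ x = p.2 then (false, p.2 + 1) else (decide (x = p.2), p.2)

def FS (u : List Λ) : Bool × Λ := u.foldl step (false, 0)

def outOf (q : Bool × Λ) (x : Λ) : Set Λ :=
  if q.1 = true ∧ x = q.2 then {x} else if x = q.2 then {x}ᶜ else {x}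

def res (u : List Λ) : AutTrans Bool Λ (Set Λ) :=
  ⟨(FS u.dropLast).1, u.getLastD 0, outOf (FS u.dropLast) (u.getLastD 0),
    (step (FS u.dropLast) (u.getLastD 0)).1⟩

def Qs (w : ℕ → Λ) (n : ℕ) : Bool × Λ := FS (List.ofFn fun i : Fin n => w i)

lemma pfx_succ (w : ℕ → Λ) (n : ℕ) :
    (List.ofFn fun i : Fin (n+1) => w i) = (List.ofFn fun i : Fin n => w i) ++ [w n] := by
  rw [List.ofFn_succ']
  simp [List.concat_eq_append]

lemma Qs_zero (w : ℕ → Λ) : Qs w 0 = (false, 0) := rfl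

lemma Qs_succ (w : ℕ → Λ) (n : ℕ) : Qs w (n+1) = step (Qs w n) (w n) := by
  unfold Qs FS
  rw [pfx_succ, List.foldl_append]
  rfl

lemma resRun_eq (w : ℕ → Λ) (n : ℕ) :
    M.resRun res w n = ⟨(Qs w n).1, w n, outOf (Qs w n) (w n), (Qs w (n+1)).1⟩ := by
  show res (List.ofFn fun i : Fin (n+1) => w i) = _
  rw [Qs_succ]
  unfold res
  rw [pfx_succ w n, List.dropLast_concat, List.getLastD_concat]
  rfl

/-- Violation of the watcher at time `n`. -/
def Viol (w : ℕ → Λ) (n : ℕ) : Prop := (Qs w n).1 = true ∧ w n = (Qs w n).2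

lemma viol_zero (w : ℕ → Λ) : ¬ Viol w 0 := by
  intro h
  have := h.1
  rw [Qs_zero] at this
  simp at this

lemma Qs_succ_of_not_viol {w : ℕ → Λ} {n : ℕ} (h : ¬ Viol w n) :
    Qs w (n+1) = (decide (w n = (Qs w n).2), (Qs w n).2) := by
  rw [Qs_succ]; simp only [step, Viol] at *; rw [if_neg h]

lemma Qs_succ_of_viol {w : ℕ → Λ} {n : ℕ} (h : Viol w n) :
    Qs w (n+1) = (false, (Qs w n).2 + 1) := by
  rw [Qs_succ]; simp only [step, Viol] at *; rw [if_pos h]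

lemma watch_const {w : ℕ → Λ} {n m : ℕ} (hnm : n ≤ m)
    (h : ∀ k, n ≤ k → k < m → ¬ Viol w k) : (Qs w m).2 = (Qs w n).2 := by
  induction m, hnm using Nat.le_induction with
  | base => rfl
  | succ m hm ih =>
    have hnv : ¬ Viol w m := h m hm (by omega)
    rw [Qs_succ_of_not_viol hnv]
    exact ih fun k hk1 hk2 => h k hk1 (by omega)

lemma viol_prev {w : ℕ → Λ} {n : ℕ} (h : Viol w (n+1)) :
    w n = w (n+1) ∧ w (n+1) = (Qs w (n+1)).2 := by
  have h1 := h.1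
  by_cases hV : Viol w n
  · rw [Qs_succ_of_viol hV] at h1; simp at h1
  · rw [Qs_succ_of_not_viol hV] at h1
    simp only at h1
    have hw : w n = (Qs w n).2 := by simpa using h1
    have h2 : (Qs w (n+1)).2 = (Qs w n).2 := by rw [Qs_succ_of_not_viol hV]
    exact ⟨by rw [hw, ← h2, ← h.2], h.2⟩

lemma resolver_isRun (w : ℕ → Λ) : M.IsRunFrom M.init w (M.resRun res w) := by
  constructor
  · rw [resRun_eq]; rfl
  · intro n
    refine ⟨?_, by rw [resRun_eq], by rw [resRun_eq, resRun_eq]⟩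
    rw [resRun_eq]
    by_cases hV : Viol w n
    · left
      refine ⟨?_, ?_⟩
      · show (Qs w (n+1)).1 = false
        rw [Qs_succ_of_viol hV]
      · show outOf (Qs w n) (w n) = {w n}
        unfold outOf
        rw [if_pos (show (Qs w n).1 = true ∧ w n = (Qs w n).2 from hV)]
    · by_cases he : w n = (Qs w n).2
      · right; left
        have hsrc : (Qs w n).1 = false := by
          cases hb : (Qs w n).1
          · rfl
          · exact absurd ⟨hb, he⟩ hV
        refine ⟨hsrc, ?_, ?_⟩
        · show (Qs w (n+1)).1 = true
          rw [Qs_succ_of_not_viol hV]; simp [he]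
        · show outOf (Qs w n) (w n) = {w n}ᶜ
          unfold outOf
          rw [if_neg (show ¬((Qs w n).1 = true ∧ w n = (Qs w n).2) from hV), if_pos he]
      · left
        refine ⟨?_, ?_⟩
        · show (Qs w (n+1)).1 = false
          rw [Qs_succ_of_not_viol hV]; simp [he]
        · show outOf (Qs w n) (w n) = {w n}
          unfold outOf
          rw [if_neg (show ¬((Qs w n).1 = true ∧ w n = (Qs w n).2) from hV), if_neg he]


lemma resolver_accepts (w : ℕ → Λ) (hw : w ∈ M.Lang) :
    (fun n => (M.resRun res w n).out) ∈ M.acc := by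
  classical
  obtain ⟨v, N, hv⟩ := (M_lang_iff w).1 hw
  -- eventually no violations
  have main : ∃ N', ∀ n, N' ≤ n → ¬ Viol w n := by
    by_contra hcon
    push_neg at hcon
    -- next violation, with minimality
    have nextv : ∀ n : ℕ, ∃ m, n ≤ m ∧ Viol w m ∧ ∀ k, n ≤ k → k < m → ¬ Viol w k := by
      intro n
      obtain ⟨n', hn', hV⟩ := hcon n
      have hex : ∃ m, n ≤ m ∧ Viol w m := ⟨n', hn', hV⟩
      obtain ⟨m, hm⟩ := hex
      let P := fun m => n ≤ m ∧ Viol w m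
      have hP : ∃ m, P m := ⟨m, hm⟩
      refine ⟨Nat.find hP, (Nat.find_spec hP).1, (Nat.find_spec hP).2, ?_⟩
      intro k hk1 hk2 hVk
      exact Nat.find_min hP hk2 ⟨hk1, hVk⟩
    have chainv : ∀ n, Viol w n → ∃ m, n < m ∧ Viol w m ∧ (Qs w m).2 = (Qs w n).2 + 1 := by
      intro n hV
      obtain ⟨m, hm, hVm, hmin⟩ := nextv (n+1)
      refine ⟨m, by omega, hVm, ?_⟩
      have h1 : (Qs w m).2 = (Qs w (n+1)).2 := watch_const hm hmin
      rw [h1, Qs_succ_of_viol hV]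
    have reach : ∀ N0 : ℕ, ∃ n, N0 ≤ n ∧ Viol w n ∧ (Qs w n).2 = v := by
      intro N0
      obtain ⟨n₀, hn₀, hV₀⟩ := hcon N0
      have htri : ∀ a b : Fin 3, b = a ∨ b = a + 1 ∨ b = a + 1 + 1 := by decide
      rcases htri (Qs w n₀).2 v with h | h | h
      · exact ⟨n₀, hn₀, hV₀, h.symm⟩
      · obtain ⟨n₁, hlt, hV₁, he₁⟩ := chainv n₀ hV₀
        exact ⟨n₁, by omega, hV₁, by rw [he₁, ← h]⟩
      · obtain ⟨n₁, hlt₁, hV₁, he₁⟩ := chainv n₀ hV₀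
        obtain ⟨n₂, hlt₂, hV₂, he₂⟩ := chainv n₁ hV₁
        exact ⟨n₂, by omega, hV₂, by rw [he₂, he₁, ← h]⟩
    obtain ⟨n, hn, hV, hwv⟩ := reach (N+1)
    obtain ⟨n', rfl⟩ : ∃ n', n = n' + 1 := ⟨n - 1, by omega⟩
    obtain ⟨hww, hwq⟩ := viol_prev hV
    have hv1 : w (n'+1) = v := by rw [hwq, hwv]
    exact hv n' (by omega) ⟨by rw [hww, hv1], hv1⟩
  obtain ⟨N', hN'⟩ := main
  refine ⟨(Qs w N').2, N', fun m hm => ?_⟩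
  have hwc : (Qs w m).2 = (Qs w N').2 := watch_const hm fun k hk1 _ => hN' k hk1
  show (Qs w N').2 ∉ (M.resRun res w m).out
  rw [resRun_eq]
  show (Qs w N').2 ∉ outOf (Qs w m) (w m)
  have hnV : ¬ Viol w m := hN' m hm
  unfold outOf
  rw [if_neg (show ¬((Qs w m).1 = true ∧ w m = (Qs w m).2) from hnV)]
  by_cases he : w m = (Qs w m).2
  · rw [if_pos he]
    simp only [Set.mem_compl_iff, Set.mem_singleton_iff, not_not]
    rw [he, hwc]
  · rw [if_neg he]
    simp only [Set.mem_singleton_iff]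
    intro hcontra
    exact he (by rw [← hcontra, hwc])

theorem M_HD : M.HistoryDeterministic :=
  ⟨res, fun w => ⟨resolver_isRun w, resolver_accepts w⟩⟩

theorem M_size : M.size = 2 := by
  simp [Automaton.size, M]
  exact Fintype.card_bool


def z₀ : ℕ → Λ := fun n => ⟨n % 6 / 2, by omega⟩

lemma z₀_mem_K : z₀ ∈ K := by
  intro v n
  have hv := v.isLt
  refine ⟨6*(n+1) + 2*v.val, by omega, ?_, ?_⟩
  · apply Fin.ext
    show (6*(n+1) + 2*v.val) % 6 / 2 = v.val
    omega
  · apply Fin.ext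
    show (6*(n+1) + 2*v.val + 1) % 6 / 2 = v.val
    omega

lemma exists_N0 {T : Type} [Finite T] (ρ : ℕ → T) :
    ∃ N₀ : ℕ, ∀ n, N₀ ≤ n → ∀ N, ∃ m, N ≤ m ∧ ρ m = ρ n := by
  classical
  have h : ∀ t : T, ∃ N : ℕ, (∀ N', ∃ m, N' ≤ m ∧ ρ m = t) ∨ (∀ m, N ≤ m → ρ m ≠ t) := by
    intro t
    by_cases h : ∀ N', ∃ m, N' ≤ m ∧ ρ m = t
    · exact ⟨0, Or.inl h⟩
    · push_neg at h
      obtain ⟨N, hN⟩ := h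
      exact ⟨N, Or.inr fun m hm => hN m hm⟩
  choose f hf using h
  haveI := Fintype.ofFinite T
  refine ⟨Finset.univ.sup f, fun n hn N => ?_⟩
  rcases hf (ρ n) with h | h
  · exact h N
  · exact absurd rfl (h n (le_trans (Finset.le_sup (Finset.mem_univ _)) hn))

section GPath

variable {Q C' : Type} {Tinf : Set (AutTrans Q Λ (Set C'))} {x : Λ}

/-- A good path: a nonempty composable sequence of transitions from `Tinf`,
from state `s` to state `u`, starting with a non-`x` letter and having no two
consecutive `x` letters. -/
def GP (Tinf : Set (AutTrans Q Λ (Set C'))) (x : Λ) (s u : Q)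
    (l : List (AutTrans Q Λ (Set C'))) : Prop :=
  l ≠ [] ∧
  List.Chain' (fun a b => a.dst = b.src) l ∧
  List.Chain' (fun a b => ¬(a.lab = x ∧ b.lab = x)) l ∧
  (∀ a ∈ l.head?, a.src = s ∧ a.lab ≠ x) ∧
  (∀ a ∈ l.getLast?, a.dst = u) ∧
  (∀ a ∈ l, a ∈ Tinf)

lemma GP_single {t : AutTrans Q Λ (Set C')} (ht : t ∈ Tinf) (hl : t.lab ≠ x) :
    GP Tinf x t.src t.dst [t] := by
  refine ⟨by simp, List.isChain_singleton t, List.isChain_singleton t, ?_, ?_, ?_⟩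
  · intro a ha; simp at ha; subst ha; exact ⟨rfl, hl⟩
  · intro a ha; simp at ha; subst ha; rfl
  · intro a ha; simp at ha; subst ha; exact ht

lemma GP_append {s u v : Q} {l₁ l₂ : List (AutTrans Q Λ (Set C'))}
    (h₁ : GP Tinf x s u l₁) (h₂ : GP Tinf x u v l₂) :
    GP Tinf x s v (l₁ ++ l₂) := by
  obtain ⟨ne₁, c₁, s₁, hh₁, hl₁, m₁⟩ := h₁
  obtain ⟨ne₂, c₂, s₂, hh₂, hl₂, m₂⟩ := h₂
  refine ⟨by simp [ne₁], ?_, ?_, ?_, ?_, ?_⟩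
  · show List.IsChain _ (_ ++ _); rw [List.isChain_append]
    refine ⟨c₁, c₂, fun a ha b hb => ?_⟩
    rw [hl₁ a ha, ← (hh₂ b hb).1]
  · show List.IsChain _ (_ ++ _); rw [List.isChain_append]
    refine ⟨s₁, s₂, fun a ha b hb => ?_⟩
    rintro ⟨_, hbx⟩; exact (hh₂ b hb).2 hbx
  · intro a ha
    cases l₁ with
    | nil => exact absurd rfl ne₁
    | cons hd tl =>
      simp only [List.cons_append, List.head?_cons, Option.mem_some_iff] at ha
      subst ha
      exact hh₁ hd (by simp)
  · intro a ha
    rw [List.getLast?_append] at ha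
    rw [List.getLast?_eq_getLast ne₂] at ha
    simp only [Option.some_or, Option.mem_some_iff] at ha
    subst ha
    exact hl₂ _ (by rw [List.getLast?_eq_getLast ne₂]; rfl)
  · intro a ha
    rcases List.mem_append.mp ha with h | h
    exacts [m₁ a h, m₂ a h]

lemma GP_snoc {s u : Q} {l : List (AutTrans Q Λ (Set C'))} {t : AutTrans Q Λ (Set C')}
    (h : GP Tinf x s u l) (ht : t ∈ Tinf) (hsrc : t.src = u)
    (hj : t.lab ≠ x ∨ ∀ a ∈ l.getLast?, a.lab ≠ x) :
    GP Tinf x s t.dst (l ++ [t]) := by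
  obtain ⟨ne, c₁, c₂, hh, hl, m⟩ := h
  refine ⟨by simp, ?_, ?_, ?_, ?_, ?_⟩
  · show List.IsChain _ (_ ++ _); rw [List.isChain_append]
    refine ⟨c₁, List.isChain_singleton t, fun a ha b hb => ?_⟩
    simp only [List.head?_cons, Option.mem_some_iff] at hb
    subst hb
    rw [hl a ha, hsrc]
  · show List.IsChain _ (_ ++ _); rw [List.isChain_append]
    refine ⟨c₂, List.isChain_singleton t, fun a ha b hb => ?_⟩
    simp only [List.head?_cons, Option.mem_some_iff] at hb
    subst hb
    rintro ⟨hax, htx⟩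
    rcases hj with hj | hj
    · exact hj htx
    · exact hj a ha hax
  · intro a ha
    cases l with
    | nil => exact absurd rfl ne
    | cons hd tl =>
      simp only [List.cons_append, List.head?_cons, Option.mem_some_iff] at ha
      subst ha
      exact hh hd (by simp)
  · intro a ha
    rw [List.getLast?_concat] at ha
    simp only [Option.mem_some_iff] at ha
    subst ha
    rfl
  · intro a ha
    rcases List.mem_append.mp ha with h | h
    · exact m a h
    · simp at h; subst h; exact ht

end GPath


lemma badRun {C' : Type} [Fintype C'] (B : Automaton Λ (Set C'))
    (hacc : B.acc = genBuchi C') (hLang : B.Lang = K)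
    (ρ : ℕ → AutTrans B.Q Λ (Set C'))
    (hrun : B.IsRunFrom B.init z₀ ρ)
    (Tinf : Set (AutTrans B.Q Λ (Set C')))
    (hTdelta : ∀ t ∈ Tinf, t ∈ B.delta)
    (x : Λ) (q : B.Q)
    (hvis : ∀ N, ∃ n, N ≤ n ∧ (ρ n).src = q)
    (L : List (AutTrans B.Q Λ (Set C')))
    (hGPL : GP Tinf x q q L)
    (hcols : ∀ γ : C', ∃ t ∈ L, γ ∈ t.out) : False := by
  classical
  obtain ⟨hne, hc₁, hc₂, hhead, hlast, hmemL⟩ := hGPL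
  obtain ⟨n₁, hn₁, hq₁⟩ := hvis 1
  set len := L.length with hlendef
  have hlenpos : 0 < len := List.length_pos_iff.mpr hne
  have hget0 : (L.get ⟨0, hlenpos⟩).src = q ∧ (L.get ⟨0, hlenpos⟩).lab ≠ x := by
    apply hhead
    rw [List.get_mk_zero, List.head?_eq_head hne]
    rfl
  have hgetlast : (L.get ⟨len - 1, by omega⟩).dst = q := by
    apply hlast
    rw [List.getLast?_eq_getLast hne, List.getLast_eq_getElem]
    rfl
  have hchain := List.isChain_iff_getElem.mp hc₁
  have hsafe := List.isChain_iff_getElem.mp hc₂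
  -- the cyclic continuation
  set cyc : ℕ → AutTrans B.Q Λ (Set C') :=
    fun k => L.get ⟨k % len, Nat.mod_lt _ hlenpos⟩ with hcyc
  have cyc_get : ∀ (k : ℕ) (h : k < len), cyc k = L.get ⟨k, h⟩ := by
    intro k h
    exact congrArg L.get (Fin.ext (Nat.mod_eq_of_lt h))
  have cyc_mem : ∀ k, cyc k ∈ L := fun k => List.get_mem _ _
  have cyc_succ_eq : ∀ k, cyc (k + 1) = L.get ⟨(k % len + 1) % len, Nat.mod_lt _ hlenpos⟩ := by
    intro k
    refine congrArg L.get (Fin.ext ?_)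
    show (k + 1) % len = (k % len + 1) % len
    exact (Nat.mod_add_mod k len 1).symm
  have cyc_dst : ∀ k, (cyc k).dst = (cyc (k+1)).src := by
    intro k
    have hklt : k % len < len := Nat.mod_lt _ hlenpos
    by_cases hw : k % len + 1 < len
    · have e1 : cyc (k+1) = L.get ⟨k % len + 1, hw⟩ := by
        rw [cyc_succ_eq k]
        exact congrArg L.get (Fin.ext (Nat.mod_eq_of_lt hw))
      rw [e1]
      exact hchain (k % len) (by omega)
    · have hk1 : k % len = len - 1 := by omega
      have e1 : cyc (k+1) = L.get ⟨0, hlenpos⟩ := by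
        rw [cyc_succ_eq k]
        refine congrArg L.get (Fin.ext ?_)
        show (k % len + 1) % len = 0
        rw [hk1]
        have : len - 1 + 1 = len := by omega
        rw [this, Nat.mod_self]
      have e0 : cyc k = L.get ⟨len - 1, by omega⟩ := by
        refine congrArg L.get (Fin.ext ?_)
        show k % len = len - 1
        exact hk1
      rw [e0, e1, hgetlast, hget0.1]
  have cyc_safe : ∀ k, ¬((cyc k).lab = x ∧ (cyc (k+1)).lab = x) := by
    intro k
    have hklt : k % len < len := Nat.mod_lt _ hlenpos
    by_cases hw : k % len + 1 < len
    · have e1 : cyc (k+1) = L.get ⟨k % len + 1, hw⟩ := by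
        rw [cyc_succ_eq k]
        exact congrArg L.get (Fin.ext (Nat.mod_eq_of_lt hw))
      rw [e1]
      exact hsafe (k % len) (by omega)
    · have hk1 : k % len = len - 1 := by omega
      have e1 : cyc (k+1) = L.get ⟨0, hlenpos⟩ := by
        rw [cyc_succ_eq k]
        refine congrArg L.get (Fin.ext ?_)
        show (k % len + 1) % len = 0
        rw [hk1]
        have : len - 1 + 1 = len := by omega
        rw [this, Nat.mod_self]
      rw [e1]
      rintro ⟨_, h2⟩
      exact hget0.2 h2
  -- the glued run
  set ψ : ℕ → AutTrans B.Q Λ (Set C') :=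
    fun n => if n < n₁ then ρ n else cyc (n - n₁) with hψ
  have hψlt : ∀ n, n < n₁ → ψ n = ρ n := by
    intro n h; simp only [hψ, if_pos h]
  have hψge : ∀ n, n₁ ≤ n → ψ n = cyc (n - n₁) := by
    intro n h; simp only [hψ]; rw [if_neg (by omega)]
  have hrunψ : B.IsRunFrom B.init (fun n => (ψ n).lab) ψ := by
    refine ⟨?_, fun n => ⟨?_, rfl, ?_⟩⟩
    · rw [hψlt 0 (by omega)]; exact hrun.1
    · by_cases h : n < n₁
      · rw [hψlt n h]; exact (hrun.2 n).1
      · rw [hψge n (by omega)]; exact hTdelta _ (hmemL _ (cyc_mem _))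
    · by_cases h2 : n + 1 < n₁
      · rw [hψlt n (by omega), hψlt (n+1) h2]; exact (hrun.2 n).2.2
      · by_cases h3 : n + 1 = n₁
        · rw [hψlt n (by omega), hψge (n+1) (by omega)]
          have e1 : (ρ n).dst = q := by
            rw [(hrun.2 n).2.2, h3, hq₁]
          have e2 : cyc (n + 1 - n₁) = L.get ⟨0, hlenpos⟩ := by
            have : n + 1 - n₁ = 0 := by omega
            rw [this]
            exact cyc_get 0 hlenpos
          rw [e1, e2, hget0.1]
        · have hn : n₁ ≤ n := by omega
          rw [hψge n hn, hψge (n+1) (by omega)]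
          have e : n + 1 - n₁ = (n - n₁) + 1 := by omega
          rw [e]
          exact cyc_dst (n - n₁)
  have haccψ : (fun n => (ψ n).out) ∈ B.acc := by
    rw [hacc]
    intro γ n
    obtain ⟨t, htL, hγ⟩ := hcols γ
    obtain ⟨⟨i, hi⟩, hidx⟩ := List.mem_iff_get.mp htL
    refine ⟨n₁ + (i + len * (n + 1)), ?_, ?_⟩
    · have : n + 1 ≤ len * (n+1) := Nat.le_mul_of_pos_left _ hlenpos
      omega
    · show γ ∈ (ψ (n₁ + (i + len * (n + 1)))).out
      rw [hψge _ (by omega)]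
      have e1 : n₁ + (i + len * (n + 1)) - n₁ = i + len * (n+1) := by omega
      rw [e1]
      have e2 : cyc (i + len * (n+1)) = L.get ⟨i, hi⟩ := by
        refine congrArg L.get (Fin.ext ?_)
        show (i + len * (n+1)) % len = i
        rw [Nat.add_mul_mod_self_left]
        exact Nat.mod_eq_of_lt hi
      rw [e2, hidx]
      exact hγ
  have hwlang : (fun n => (ψ n).lab) ∈ B.Lang := ⟨ψ, hrunψ, haccψ⟩
  rw [hLang] at hwlang
  obtain ⟨m, hm, hx1, hx2⟩ := hwlang x n₁
  have hψm : ψ m = cyc (m - n₁) := hψge m hm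
  have hψm1 : ψ (m+1) = cyc ((m - n₁) + 1) := by
    rw [hψge (m+1) (by omega)]
    have : m + 1 - n₁ = (m - n₁) + 1 := by omega
    rw [this]
  apply cyc_safe (m - n₁)
  constructor
  · rw [← hψm]; exact hx1
  · rw [← hψm1]; exact hx2


lemma assemble {Q C' : Type} [Fintype C'] {Tinf : Set (AutTrans Q Λ (Set C'))} {x : Λ} {q : Q}
    (F₀ : List (AutTrans Q Λ (Set C'))) (hF₀ : GP Tinf x q q F₀)
    (hcyc : ∀ γ : C', ∃ l, GP Tinf x q q l ∧ ∃ t ∈ l, γ ∈ t.out) :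
    ∃ L, GP Tinf x q q L ∧ ∀ γ : C', ∃ t ∈ L, γ ∈ t.out := by
  classical
  choose f hf1 hf2 using hcyc
  refine ⟨(Finset.univ : Finset C').toList.foldr (fun γ acc => f γ ++ acc) F₀, ?_, ?_⟩
  · have hind : ∀ lst : List C', GP Tinf x q q (lst.foldr (fun γ acc => f γ ++ acc) F₀) := by
      intro lst
      induction lst with
      | nil => exact hF₀
      | cons hd tl ih => exact GP_append (hf1 hd) ih
    exact hind _
  · intro γ
    have hγmem : γ ∈ (Finset.univ : Finset C').toList := by
      rw [Finset.mem_toList]; exact Finset.mem_univ γ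
    have hind : ∀ lst : List C', γ ∈ lst →
        ∃ t ∈ lst.foldr (fun γ acc => f γ ++ acc) F₀, γ ∈ t.out := by
      intro lst hmem
      induction lst with
      | nil => simp at hmem
      | cons hd tl ih =>
        rcases List.mem_cons.mp hmem with rfl | hmem'
        · obtain ⟨t, ht, hγt⟩ := hf2 γ
          exact ⟨t, List.mem_append.mpr (Or.inl ht), hγt⟩
        · obtain ⟨t, ht, hγt⟩ := ih hmem'
          exact ⟨t, List.mem_append.mpr (Or.inr ht), hγt⟩
    exact hind _ hγmem

theorem lower {C' : Type} [Fintype C'] (B : Automaton Λ (Set C'))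
    (hacc : B.acc = genBuchi C') (hHD : B.HistoryDeterministic) (hLang : B.Lang = K) :
    2 < B.size := by
  classical
  by_contra hle
  push_neg at hle
  obtain ⟨r, hr⟩ := hHD
  set ρ := B.resRun r z₀ with hρdef
  have hrun : B.IsRunFrom B.init z₀ ρ := (hr z₀).1
  have hz₀ : z₀ ∈ B.Lang := by rw [hLang]; exact z₀_mem_K
  have haccept : (fun n => (ρ n).out) ∈ genBuchi C' := by
    rw [← hacc]; exact (hr z₀).2 hz₀
  letI : Fintype B.Q := B.fin
  haveI hfinT : Finite (AutTrans B.Q Λ (Set C')) := by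
    have hinj : Function.Injective
        (fun t : AutTrans B.Q Λ (Set C') => (t.src, t.lab, t.out, t.dst)) := by
      rintro ⟨a, b, c, d⟩ ⟨a', b', c', d'⟩ h
      simp_all
    exact Finite.of_injective _ hinj
  obtain ⟨N₀, hN₀⟩ := exists_N0 ρ
  set Tinf : Set (AutTrans B.Q Λ (Set C')) := {t | ∃ n, N₀ ≤ n ∧ ρ n = t} with hTinfdef
  have hρmem : ∀ n, N₀ ≤ n → ρ n ∈ Tinf := fun n hn => ⟨n, hn, rfl⟩
  have hTrec : ∀ t ∈ Tinf, ∀ N, ∃ m, N ≤ m ∧ ρ m = t := by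
    rintro t ⟨n, hn, rfl⟩ N; exact hN₀ n hn N
  have hTdelta : ∀ t ∈ Tinf, t ∈ B.delta := by
    rintro t ⟨n, hn, rfl⟩; exact (hrun.2 n).1
  set Sinf : Set B.Q := {s | ∃ t ∈ Tinf, t.src = s} with hSinfdef
  have hsrcS : ∀ t ∈ Tinf, t.src ∈ Sinf := fun t ht => ⟨t, ht, rfl⟩
  have hvisS : ∀ s ∈ Sinf, ∀ N, ∃ n, N ≤ n ∧ N₀ ≤ n ∧ (ρ n).src = s := by
    rintro s ⟨t, ht, rfl⟩ N
    obtain ⟨m, hm, he⟩ := hTrec t ht (max N N₀)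
    exact ⟨m, le_trans (le_max_left _ _) hm, le_trans (le_max_right _ _) hm, by rw [he]⟩
  have hdstS : ∀ t ∈ Tinf, t.dst ∈ Sinf := by
    intro t ht
    obtain ⟨m, hm, he⟩ := hTrec t ht N₀
    refine ⟨ρ (m+1), hρmem (m+1) (by omega), ?_⟩
    rw [← (hrun.2 m).2.2, he]
  have hcol : ∀ γ : C', ∃ t ∈ Tinf, γ ∈ t.out := by
    intro γ
    obtain ⟨m, hm, hγ⟩ := haccept γ N₀
    exact ⟨ρ m, hρmem m hm, hγ⟩
  have hlet : ∀ y : Λ, ∃ t ∈ Tinf, t.lab = y := by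
    intro y
    obtain ⟨m, hm, h1, _⟩ := z₀_mem_K y N₀
    exact ⟨ρ m, hρmem m hm, by rw [(hrun.2 m).2.1]; exact h1⟩
  by_cases hsing : ∀ p ∈ Sinf, ∀ q ∈ Sinf, p = q
  · -- CASE A: a single recurrent state
    have hq₀S : (ρ N₀).src ∈ Sinf := hsrcS _ (hρmem N₀ le_rfl)
    set q₀ := (ρ N₀).src with hq₀def
    have hall : ∀ t ∈ Tinf, t.src = q₀ := fun t ht => hsing _ (hsrcS t ht) _ hq₀S
    have halld : ∀ t ∈ Tinf, t.dst = q₀ := fun t ht => hsing _ (hdstS t ht) _ hq₀S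
    obtain ⟨t₁, ht₁, hlab₁⟩ := hlet 1
    have h10 : (1 : Λ) ≠ 0 := by decide
    have gp₁ : GP Tinf 0 q₀ q₀ [t₁] := by
      have h := GP_single (x := 0) ht₁ (by rw [hlab₁]; exact h10)
      rwa [hall t₁ ht₁, halld t₁ ht₁] at h
    have hcyc : ∀ γ : C', ∃ l, GP Tinf 0 q₀ q₀ l ∧ ∃ t ∈ l, γ ∈ t.out := by
      intro γ
      obtain ⟨t, ht, hγ⟩ := hcol γ
      by_cases hx : t.lab = 0
      · refine ⟨[t₁] ++ [t], ?_, t, List.mem_append.mpr (Or.inr (by simp)), hγ⟩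
        have h2 := GP_snoc (x := 0) gp₁ ht (by rw [hall t ht]) (Or.inr ?_)
        · rwa [halld t ht] at h2
        · intro a ha; simp at ha; subst ha; rw [hlab₁]; exact h10
      · refine ⟨[t], ?_, t, by simp, hγ⟩
        have h := GP_single ht hx
        rwa [hall t ht, halld t ht] at h
    obtain ⟨Lbig, hLbig, hcolsbig⟩ := assemble [t₁] gp₁ hcyc
    exact badRun B hacc hLang ρ hrun Tinf hTdelta 0 q₀
      (fun N => (hvisS q₀ hq₀S N).imp fun n h => ⟨h.1, h.2.2⟩) Lbig hLbig hcolsbig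
  · -- CASE B: two recurrent states
    push_neg at hsing
    obtain ⟨d, hdS, e, heS, hde⟩ := hsing
    have hcover : ∀ s ∈ Sinf, s = d ∨ s = e := by
      intro s hs
      by_contra hc
      push_neg at hc
      obtain ⟨hsd, hse⟩ := hc
      have hmem1 : d ∉ ({e, s} : Finset B.Q) := by
        simp only [Finset.mem_insert, Finset.mem_singleton]
        push_neg
        exact ⟨hde, Ne.symm hsd⟩
      have hmem2 : e ∉ ({s} : Finset B.Q) := by
        simp only [Finset.mem_singleton]
        exact Ne.symm hse
      have hcard : ({d, e, s} : Finset B.Q).card = 3 := by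
        rw [Finset.card_insert_of_notMem hmem1, Finset.card_insert_of_notMem hmem2,
          Finset.card_singleton]
      have hlecard := Finset.card_le_univ ({d, e, s} : Finset B.Q)
      rw [hcard] at hlecard
      have hsz : B.size = Fintype.card B.Q := rfl
      omega
    have hswitch : ∀ p ∈ Sinf, ∀ q' ∈ Sinf, p ≠ q' → ∃ t ∈ Tinf, t.src = p ∧ t.dst = q' := by
      intro p hp q' hq' hpq
      have honly : ∀ s ∈ Sinf, s ≠ p → s = q' := by
        intro s hs hsp
        rcases hcover s hs with rfl | rfl <;> rcases hcover p hp with h2 | h2 <;>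
          rcases hcover q' hq' with h3 | h3 <;> simp_all
      have hsw : ∃ n, N₀ ≤ n ∧ (ρ n).src = p ∧ (ρ (n+1)).src ≠ p := by
        by_contra hno
        push_neg at hno
        obtain ⟨np, hnp1, hnp2, hnp3⟩ := hvisS p hp N₀
        have hstay : ∀ m, np ≤ m → (ρ m).src = p := by
          intro m hm
          induction m, hm using Nat.le_induction with
          | base => exact hnp3
          | succ m hm ih => exact hno m (by omega) ih
        obtain ⟨m, hm1, hm2, hm3⟩ := hvisS q' hq' np
        exact hpq (by rw [← hstay m hm1, hm3])
      obtain ⟨n, hn, h1, h2⟩ := hsw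
      refine ⟨ρ n, hρmem n hn, h1, ?_⟩
      have hs2 : (ρ (n+1)).src ∈ Sinf := hsrcS _ (hρmem (n+1) (by omega))
      rw [(hrun.2 n).2.2]
      exact honly _ hs2 h2
    -- Tier 1
    have tier1 : ∀ d' e', d' ∈ Sinf → e' ∈ Sinf → d' ≠ e' →
        ∀ y : Λ, (∀ t ∈ Tinf, t.src = d' → t.lab = y) → False := by
      intro d' e' hd' he' hde' y hQ
      set x := y + 1 with hx
      have hyx : y ≠ x := by
        have h : ∀ a : Fin 3, a ≠ a + 1 := by decide
        rw [hx]; exact h y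
      have hcover' : ∀ s ∈ Sinf, s = d' ∨ s = e' := by
        intro s hs
        rcases hcover s hs with h1 | h1 <;> rcases hcover d' hd' with h2 | h2 <;>
          rcases hcover e' he' with h3 | h3 <;>
          first
            | exact Or.inl (h1.trans h2.symm)
            | exact Or.inr (h1.trans h3.symm)
            | exact absurd (h2.trans h3.symm) hde'
      obtain ⟨tde, htde, htde1, htde2⟩ := hswitch d' hd' e' he' hde'
      obtain ⟨ted, hted, hted1, hted2⟩ := hswitch e' he' d' hd' (Ne.symm hde')
      have hlabde : tde.lab = y := hQ tde htde htde1
      by_cases hoe : ∃ t ∈ Tinf, t.src = e' ∧ t.lab ≠ x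
      · obtain ⟨t₁, ht₁, ht₁s, ht₁l⟩ := hoe
        have hPed : ∃ l, GP Tinf x e' d' l := by
          have h1 : GP Tinf x e' t₁.dst [t₁] := by
            have h := GP_single (x := x) ht₁ ht₁l; rwa [ht₁s] at h
          rcases hcover' t₁.dst (hdstS t₁ ht₁) with hD | hE
          · exact ⟨[t₁], hD ▸ h1⟩
          · refine ⟨[t₁] ++ [ted], ?_⟩
            have h2 := GP_snoc (x := x) h1 hted (by rw [hted1, hE]) (Or.inr ?_)
            · rwa [hted2] at h2
            · intro a ha; simp at ha; subst ha; exact ht₁l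
        obtain ⟨Ped, hPedGP⟩ := hPed
        have hPde : GP Tinf x d' e' [tde] := by
          have h := GP_single (x := x) htde (by rw [hlabde]; exact hyx)
          rwa [htde1, htde2] at h
        have embed : ∀ (s u : B.Q) (l : List (AutTrans B.Q Λ (Set C'))),
            GP Tinf x s u l → s ∈ Sinf → u ∈ Sinf →
            ∃ L, GP Tinf x d' d' L ∧ ∀ t ∈ l, t ∈ L := by
          intro s u l hgp hs hu
          rcases hcover' s hs with rfl | rfl <;> rcases hcover' u hu with rfl | rfl
          · exact ⟨l, hgp, fun t ht => ht⟩
          · exact ⟨l ++ Ped, GP_append hgp hPedGP, fun t ht => List.mem_append.mpr (Or.inl ht)⟩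
          · exact ⟨[tde] ++ l, GP_append hPde hgp, fun t ht => List.mem_append.mpr (Or.inr ht)⟩
          · exact ⟨[tde] ++ (l ++ Ped), GP_append hPde (GP_append hgp hPedGP),
              fun t ht => List.mem_append.mpr (Or.inr (List.mem_append.mpr (Or.inl ht)))⟩
        have hF₀ : GP Tinf x d' d' ([tde] ++ Ped) := GP_append hPde hPedGP
        have hcyc : ∀ γ : C', ∃ l, GP Tinf x d' d' l ∧ ∃ t ∈ l, γ ∈ t.out := by
          intro γ
          obtain ⟨t, ht, hγ⟩ := hcol γ
          by_cases hlx : t.lab = x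
          · have hsrct : t.src = e' := by
              rcases hcover' t.src (hsrcS t ht) with h | h
              · have h' := hQ t ht h
                rw [hlx] at h'
                exact absurd h' (Ne.symm hyx)
              · exact h
            have h1 : GP Tinf x d' t.dst ([tde] ++ [t]) := by
              refine GP_snoc (x := x) hPde ht (by rw [hsrct]) (Or.inr ?_)
              intro a ha; simp at ha; subst ha; rw [hlabde]; exact hyx
            obtain ⟨L, hL, hsub⟩ := embed d' t.dst ([tde] ++ [t]) h1 hd' (hdstS t ht)
            exact ⟨L, hL, t, hsub t (List.mem_append.mpr (Or.inr (by simp))), hγ⟩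
          · have h1 : GP Tinf x t.src t.dst [t] := GP_single ht hlx
            obtain ⟨L, hL, hsub⟩ := embed _ _ [t] h1 (hsrcS t ht) (hdstS t ht)
            exact ⟨L, hL, t, hsub t (by simp), hγ⟩
        obtain ⟨Lbig, hLbig, hcolsbig⟩ := assemble ([tde] ++ Ped) hF₀ hcyc
        exact badRun B hacc hLang ρ hrun Tinf hTdelta x d'
          (fun N => (hvisS d' hd' N).imp fun n h => ⟨h.1, h.2.2⟩) Lbig hLbig hcolsbig
      · push_neg at hoe
        obtain ⟨t₂, ht₂, hlab₂⟩ := hlet (y + 2)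
        have hcontr : ∀ a : Fin 3, a + 2 ≠ a ∧ a + 2 ≠ a + 1 := by decide
        rcases hcover' t₂.src (hsrcS t₂ ht₂) with h | h
        · have h' := hQ t₂ ht₂ h
          rw [hlab₂] at h'
          exact (hcontr y).1 h'
        · have h' := hoe t₂ ht₂ h
          rw [hlab₂, hx] at h'
          exact (hcontr y).2 h'
    -- Qelim
    have hQelim : ∀ s ∈ Sinf, ∀ y : Λ, ∃ t ∈ Tinf, t.src = s ∧ t.lab ≠ y := by
      intro s hs y
      by_contra h
      push_neg at h
      rcases hcover s hs with rfl | rfl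
      · exact tier1 s e hs heS hde y h
      · exact tier1 s d hs hdS (Ne.symm hde) y h
    -- Tier 2
    have tier2 : ∀ x : Λ, ∃ s ∈ Sinf, ∀ t ∈ Tinf, t.dst = s → t.lab = x := by
      intro x
      by_contra hcon
      push_neg at hcon
      obtain ⟨ud, hud, hud1, hud2⟩ := hcon d hdS
      obtain ⟨ue, hue, hue1, hue2⟩ := hcon e heS
      obtain ⟨od, hod, hod1, hod2⟩ := hQelim d hdS x
      obtain ⟨oe, hoe, hoe1, hoe2⟩ := hQelim e heS x
      obtain ⟨tde, htde, htde1, htde2⟩ := hswitch d hdS e heS hde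
      obtain ⟨ted, hted, hted1, hted2⟩ := hswitch e heS d hdS (Ne.symm hde)
      have hPde : ∃ l, GP Tinf x d e l := by
        have h1 : GP Tinf x d od.dst [od] := by
          have h := GP_single hod hod2; rwa [hod1] at h
        rcases hcover od.dst (hdstS od hod) with hD | hE
        · refine ⟨[od] ++ [tde], ?_⟩
          have h2 := GP_snoc h1 htde (by rw [htde1, hD]) (Or.inr ?_)
          · rwa [htde2] at h2
          · intro a ha; simp at ha; subst ha; exact hod2
        · exact ⟨[od], hE ▸ h1⟩
      have hPed : ∃ l, GP Tinf x e d l := by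
        have h1 : GP Tinf x e oe.dst [oe] := by
          have h := GP_single hoe hoe2; rwa [hoe1] at h
        rcases hcover oe.dst (hdstS oe hoe) with hD | hE
        · exact ⟨[oe], hD ▸ h1⟩
        · refine ⟨[oe] ++ [ted], ?_⟩
          have h2 := GP_snoc h1 hted (by rw [hted1, hE]) (Or.inr ?_)
          · rwa [hted2] at h2
          · intro a ha; simp at ha; subst ha; exact hoe2
      obtain ⟨Pde, hPdeGP⟩ := hPde
      obtain ⟨Ped, hPedGP⟩ := hPed
      have embed : ∀ (s u : B.Q) (l : List (AutTrans B.Q Λ (Set C'))),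
          GP Tinf x s u l → s ∈ Sinf → u ∈ Sinf →
          ∃ L, GP Tinf x d d L ∧ ∀ t ∈ l, t ∈ L := by
        intro s u l hgp hs hu
        rcases hcover s hs with rfl | rfl <;> rcases hcover u hu with rfl | rfl
        · exact ⟨l, hgp, fun t ht => ht⟩
        · exact ⟨l ++ Ped, GP_append hgp hPedGP, fun t ht => List.mem_append.mpr (Or.inl ht)⟩
        · exact ⟨Pde ++ l, GP_append hPdeGP hgp, fun t ht => List.mem_append.mpr (Or.inr ht)⟩
        · exact ⟨Pde ++ (l ++ Ped), GP_append hPdeGP (GP_append hgp hPedGP),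
            fun t ht => List.mem_append.mpr (Or.inr (List.mem_append.mpr (Or.inl ht)))⟩
      have hF₀ : GP Tinf x d d (Pde ++ Ped) := GP_append hPdeGP hPedGP
      have hcyc : ∀ γ : C', ∃ l, GP Tinf x d d l ∧ ∃ t ∈ l, γ ∈ t.out := by
        intro γ
        obtain ⟨t, ht, hγ⟩ := hcol γ
        by_cases hlx : t.lab = x
        · have hsc := hcover t.src (hsrcS t ht)
          rcases hsc with hsrcd | hsrce
          · have h1 : GP Tinf x ud.src t.dst ([ud] ++ [t]) := by
              refine GP_snoc (GP_single hud hud2) ht (by rw [hud1, hsrcd]) (Or.inr ?_)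
              intro a ha; simp at ha; subst ha; exact hud2
            obtain ⟨L, hL, hsub⟩ := embed _ _ _ h1 (hsrcS ud hud) (hdstS t ht)
            exact ⟨L, hL, t, hsub t (List.mem_append.mpr (Or.inr (by simp))), hγ⟩
          · have h1 : GP Tinf x ue.src t.dst ([ue] ++ [t]) := by
              refine GP_snoc (GP_single hue hue2) ht (by rw [hue1, hsrce]) (Or.inr ?_)
              intro a ha; simp at ha; subst ha; exact hue2
            obtain ⟨L, hL, hsub⟩ := embed _ _ _ h1 (hsrcS ue hue) (hdstS t ht)
            exact ⟨L, hL, t, hsub t (List.mem_append.mpr (Or.inr (by simp))), hγ⟩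
        · have h1 : GP Tinf x t.src t.dst [t] := GP_single ht hlx
          obtain ⟨L, hL, hsub⟩ := embed _ _ [t] h1 (hsrcS t ht) (hdstS t ht)
          exact ⟨L, hL, t, hsub t (by simp), hγ⟩
      obtain ⟨Lbig, hLbig, hcolsbig⟩ := assemble (Pde ++ Ped) hF₀ hcyc
      exact badRun B hacc hLang ρ hrun Tinf hTdelta x d
        (fun N => (hvisS d hdS N).imp fun n h => ⟨h.1, h.2.2⟩) Lbig hLbig hcolsbig
    -- Tier 3
    obtain ⟨s₀, hs₀S, hP₀⟩ := tier2 0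
    obtain ⟨s₁, hs₁S, hP₁⟩ := tier2 1
    obtain ⟨s₂, hs₂S, hP₂⟩ := tier2 2
    have hin : ∀ s ∈ Sinf, ∃ t ∈ Tinf, t.dst = s := by
      intro s hs
      rcases hcover s hs with rfl | rfl
      · obtain ⟨t, ht, _, h2⟩ := hswitch e heS s hs (Ne.symm hde)
        exact ⟨t, ht, h2⟩
      · obtain ⟨t, ht, _, h2⟩ := hswitch d hdS s hs hde
        exact ⟨t, ht, h2⟩
    have key : ∀ (a b : Λ), a ≠ b → ∀ s ∈ Sinf, (∀ t ∈ Tinf, t.dst = s → t.lab = a) →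
        (∀ t ∈ Tinf, t.dst = s → t.lab = b) → False := by
      intro a b hab s hs ha hb
      obtain ⟨t, ht, htd⟩ := hin s hs
      exact hab (by rw [← ha t ht htd, ← hb t ht htd])
    have h01 : (0 : Λ) ≠ 1 := by decide
    have h02 : (0 : Λ) ≠ 2 := by decide
    have h12 : (1 : Λ) ≠ 2 := by decide
    rcases hcover s₀ hs₀S with h0 | h0 <;> rcases hcover s₁ hs₁S with h1 | h1 <;>
      rcases hcover s₂ hs₂S with h2 | h2
    · exact key 0 1 h01 d hdS (h0 ▸ hP₀) (h1 ▸ hP₁)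
    · exact key 0 1 h01 d hdS (h0 ▸ hP₀) (h1 ▸ hP₁)
    · exact key 0 2 h02 d hdS (h0 ▸ hP₀) (h2 ▸ hP₂)
    · exact key 1 2 h12 e heS (h1 ▸ hP₁) (h2 ▸ hP₂)
    · exact key 1 2 h12 d hdS (h1 ▸ hP₁) (h2 ▸ hP₂)
    · exact key 0 2 h02 e heS (h0 ▸ hP₀) (h2 ▸ hP₂)
    · exact key 0 1 h01 e heS (h0 ▸ hP₀) (h1 ▸ hP₁)
    · exact key 0 1 h01 e heS (h0 ▸ hP₀) (h1 ▸ hP₁)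

end Stmt4Aux
/-- there is a history-deterministic generalised coBüchi automaton
such that every history-deterministic generalised Büchi automaton recognising
the complement of its language has strictly more states. -/
theorem stmt_4 :
    ∃ (A : Type) (_ : Fintype A) (C : Type) (_ : Fintype C)
      (M : Automaton A (Set C)),
      M.acc = genCoBuchi C ∧ M.HistoryDeterministic ∧
      ∀ (C' : Type) (_ : Fintype C') (B : Automaton A (Set C')),
        B.acc = genBuchi C' → B.HistoryDeterministic → B.Lang = M.Langᶜ →
        M.size < B.size := by
  refine ⟨Fin 3, inferInstance, Fin 3, inferInstance, Stmt4Aux.M, rfl, Stmt4Aux.M_HD, ?_⟩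
  intro C' fC' B hacc hHD hBL
  haveI := fC'
  have hK : B.Lang = Stmt4Aux.K := by
    rw [hBL, Stmt4Aux.M_lang_eq, compl_compl]
  have h2 := Stmt4Aux.lower B hacc hHD hK
  rw [Stmt4Aux.M_size]
  exact h2
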